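/- Let X be a Borel subset of 𝕜^d, endowed with the trace of the Borel σ-algebra, and let Φ and Ψ be measurable functional calculi on X with the same Hilbert space H. Denote by z_1, …, z_d : X → 𝕜 the coordinate projections and |z|² = |z_1|² + … + |z_d|². Then each of the following conditions implies Φ = Ψ: (1) Φ(z_j) = Ψ(z_j) for j = 1, …, d; (2) Φ and Ψ agree on the functions z_j/(1 + |z|²) for j = 1, …, d and on 1/(1 + |z|²); (3) Φ and Ψ agree on the functions z_j/(1 + |z|²)^{1/2} for j = 1, …, d. -/

import Mathlib

open scoped Topology

noncomputable section

/-- Composition `S ∘ T` of partially defined linear operators, with domain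
`{x ∈ dom T | T x ∈ dom S}`. -/
noncomputable def LinearPMap.compP {R E : Type*} [Ring R] [AddCommGroup E] [Module R E]
    (S T : E →ₗ.[R] E) : E →ₗ.[R] E where
  domain := (S.domain.comap T.toFun).map T.domain.subtype
  toFun := S.toFun.comp <| LinearMap.codRestrict S.domain
      (T.toFun.comp (Submodule.inclusion (Submodule.map_subtype_le _ _)))
      (fun x => by
        obtain ⟨y, hy, hyx⟩ := Submodule.mem_map.mp x.2
        have hxy : Submodule.inclusion
            (Submodule.map_subtype_le T.domain (S.domain.comap T.toFun)) x = y := by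
          apply Subtype.ext
          simpa using hyx.symm
        rw [LinearMap.comp_apply, hxy]
        exact hy)

/-- A measurable functional calculus on a measurable space `X`, with values in
closed partially defined operators on a Hilbert space `H` over `𝕜`. -/
structure MeasFC (X : Type*) [MeasurableSpace X] (𝕜 : Type*) [RCLike 𝕜]
    (H : Type*) [NormedAddCommGroup H] [InnerProductSpace 𝕜 H] [CompleteSpace H] where
  ap : (X → 𝕜) → (H →ₗ.[𝕜] H)
  isClosed : ∀ f : X → 𝕜, Measurable f → (ap f).IsClosed
  mfc1 : ap (fun _ => 1) = (LinearMap.id : H →ₗ[𝕜] H).toPMap ⊤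
  mfc2_add : ∀ f g : X → 𝕜, Measurable f → Measurable g → ap f + ap g ≤ ap (f + g)
  mfc2_smul : ∀ (c : 𝕜) (f : X → 𝕜), Measurable f → c • ap f ≤ ap (fun x => c * f x)
  mfc3_le : ∀ f g : X → 𝕜, Measurable f → Measurable g → (ap f).compP (ap g) ≤ ap (f * g)
  mfc3_dom : ∀ f g : X → 𝕜, Measurable f → Measurable g →
      ((ap f).compP (ap g)).domain = (ap g).domain ⊓ (ap (f * g)).domain
  mfc4_dom : ∀ f : X → 𝕜, Measurable f → (∃ C, ∀ x, ‖f x‖ ≤ C) → (ap f).domain = ⊤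
  mfc4_cont : ∀ f : X → 𝕜, Measurable f → (∃ C, ∀ x, ‖f x‖ ≤ C) →
      Continuous fun x : (ap f).domain => ap f x
  mfc4_star : ∀ f : X → 𝕜, Measurable f → (∃ C, ∀ x, ‖f x‖ ≤ C) →
      (ap f).adjoint = ap (fun x => starRingEnd 𝕜 (f x))
  mfc5 : ∀ (f : ℕ → X → 𝕜) (g : X → 𝕜), (∀ n, Measurable (f n)) → Measurable g →
      (∃ C, ∀ n x, ‖f n x‖ ≤ C) →
      (∀ x, Filter.Tendsto (fun n => f n x) Filter.atTop (𝓝 (g x))) →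
      ∀ (x y : H) (hn : ∀ n, x ∈ (ap (f n)).domain) (hg : x ∈ (ap g).domain),
        Filter.Tendsto (fun n => (inner 𝕜 (ap (f n) ⟨x, hn n⟩) y : 𝕜)) Filter.atTop
          (𝓝 (inner 𝕜 (ap g ⟨x, hg⟩) y))

/-- `B` is a `Φ`-null set: `Φ(𝟏_B) = 0`. -/
def MeasFC.IsNull {X : Type*} [MeasurableSpace X] {𝕜 : Type*} [RCLike 𝕜]
    {H : Type*} [NormedAddCommGroup H] [InnerProductSpace 𝕜 H] [CompleteSpace H]
    (Φ : MeasFC X 𝕜 H) (B : Set X) : Prop :=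
  Φ.ap (B.indicator fun _ => 1) = (0 : H →ₗ[𝕜] H).toPMap ⊤


variable {𝕜 : Type*} [RCLike 𝕜] [MeasurableSpace 𝕜] [BorelSpace 𝕜]
  {H : Type*} [NormedAddCommGroup H] [InnerProductSpace 𝕜 H] [CompleteSpace H]

section Aux

variable {𝕜' : Type*} [RCLike 𝕜'] {H' : Type*} [NormedAddCommGroup H']
  [InnerProductSpace 𝕜' H'] [CompleteSpace H']

local notation "⟪" x ", " y "⟫" => @inner 𝕜' _ _ x y

theorem compP_mem_domain_iff {S T : H' →ₗ.[𝕜'] H'} {x : H'} :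
    x ∈ (S.compP T).domain ↔ ∃ hx : x ∈ T.domain, T ⟨x, hx⟩ ∈ S.domain := by
  constructor
  · rintro ⟨y, hy, rfl⟩
    exact ⟨y.2, hy⟩
  · rintro ⟨hx, h2⟩
    exact ⟨⟨x, hx⟩, h2, rfl⟩

theorem compP_apply {S T : H' →ₗ.[𝕜'] H'} {x : H'} (hd : x ∈ (S.compP T).domain)
    (hx : x ∈ T.domain) (hx2 : T ⟨x, hx⟩ ∈ S.domain) :
    (S.compP T) ⟨x, hd⟩ = S ⟨T ⟨x, hx⟩, hx2⟩ :=
  rfl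

/-- Apply a partially defined operator with full domain as a plain function. -/
def apP (T : H' →ₗ.[𝕜'] H') (h : T.domain = ⊤) (x : H') : H' :=
  T ⟨x, h ▸ Submodule.mem_top⟩

theorem apP_congr {T S : H' →ₗ.[𝕜'] H'} (h : T = S) (h1 : T.domain = ⊤) (h2 : S.domain = ⊤) :
    apP T h1 = apP S h2 := by
  cases h; rfl

theorem apP_eq (T : H' →ₗ.[𝕜'] H') (h : T.domain = ⊤) {x : H'} (hx : x ∈ T.domain) :
    T ⟨x, hx⟩ = apP T h x := rfl

theorem eq_of_apP {T S : H' →ₗ.[𝕜'] H'} (h1 : T.domain = ⊤) (h2 : S.domain = ⊤)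
    (h : ∀ x, apP T h1 x = apP S h2 x) : T = S := by
  refine LinearPMap.ext (h1.trans h2.symm) ?_
  intro x hx hy
  exact (apP_eq T h1 hx).trans ((h x).trans (apP_eq S h2 hy).symm)

end Aux
set_option linter.unusedSectionVars false
set_option maxHeartbeats 1000000

namespace MeasFC

variable {𝕜' : Type*} [RCLike 𝕜'] {H' : Type*} [NormedAddCommGroup H']
  [InnerProductSpace 𝕜' H'] [CompleteSpace H']
  {X : Type*} [MeasurableSpace X]

local notation "⟪" x ", " y "⟫" => @inner 𝕜' _ _ x y

/-- Boundedness predicate. -/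
def Bdd (f : X → 𝕜') : Prop := ∃ C, ∀ x, ‖f x‖ ≤ C

theorem Bdd.mul {f g : X → 𝕜'} (hf : Bdd f) (hg : Bdd g) : Bdd (f * g) := by
  obtain ⟨C, hC⟩ := hf; obtain ⟨D, hD⟩ := hg
  refine ⟨(max C 0) * (max D 0), fun x => ?_⟩
  rw [Pi.mul_apply, norm_mul]
  exact mul_le_mul ((hC x).trans (le_max_left _ _)) ((hD x).trans (le_max_left _ _))
    (norm_nonneg _) (le_max_right _ _)

theorem Bdd.add {f g : X → 𝕜'} (hf : Bdd f) (hg : Bdd g) : Bdd (f + g) := by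
  obtain ⟨C, hC⟩ := hf; obtain ⟨D, hD⟩ := hg
  exact ⟨C + D, fun x => (norm_add_le _ _).trans (add_le_add (hC x) (hD x))⟩

theorem Bdd.const (c : 𝕜') : Bdd (fun _ : X => c) := ⟨‖c‖, fun _ => le_rfl⟩

theorem Bdd.smul (c : 𝕜') {f : X → 𝕜'} (hf : Bdd f) : Bdd (fun x => c * f x) :=
  Bdd.mul (Bdd.const c) hf

theorem Bdd.star {f : X → 𝕜'} (hf : Bdd f) : Bdd (fun x => starRingEnd 𝕜' (f x)) := by
  obtain ⟨C, hC⟩ := hf; exact ⟨C, fun x => by simpa using hC x⟩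

theorem meas_conj {f : X → 𝕜'} (hf : Measurable f) :
    Measurable fun x => starRingEnd 𝕜' (f x) :=
  RCLike.continuous_conj.measurable.comp hf

variable (Φ : MeasFC X 𝕜' H')

theorem domTop {f : X → 𝕜'} (hf : Measurable f) (hb : Bdd f) : (Φ.ap f).domain = ⊤ :=
  Φ.mfc4_dom f hf hb

theorem memDom {f : X → 𝕜'} (hf : Measurable f) (hb : Bdd f) (x : H') :
    x ∈ (Φ.ap f).domain := (Φ.domTop hf hb) ▸ Submodule.mem_top

/-- Value of `Φ.ap f` for bounded `f`, as a total function. -/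
def apb (f : X → 𝕜') (hf : Measurable f) (hb : Bdd f) : H' → H' :=
  apP (Φ.ap f) (Φ.domTop hf hb)

theorem apb_def {f : X → 𝕜'} (hf : Measurable f) (hb : Bdd f) {x : H'}
    (hx : x ∈ (Φ.ap f).domain) : Φ.ap f ⟨x, hx⟩ = Φ.apb f hf hb x := rfl

theorem apb_congr {f g : X → 𝕜'} (hf : Measurable f) (hbf : Bdd f) (hg : Measurable g)
    (hbg : Bdd g) (h : f = g) (x : H') : Φ.apb f hf hbf x = Φ.apb g hg hbg x := by
  cases h; rfl

theorem eq_of_apb {Ψ : MeasFC X 𝕜' H'} {f : X → 𝕜'} (hf : Measurable f) (hb : Bdd f)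
    (h : ∀ x, Φ.apb f hf hb x = Ψ.apb f hf hb x) : Φ.ap f = Ψ.ap f :=
  eq_of_apP (Φ.domTop hf hb) (Ψ.domTop hf hb) h

theorem apb_one (x : H') :
    Φ.apb (fun _ => 1) measurable_const ⟨1, fun _ => by simp⟩ x = x := by
  have h := Φ.mfc1
  show apP (Φ.ap fun _ => 1) _ x = x
  rw [apP_congr h (Φ.domTop measurable_const ⟨1, fun _ => by simp⟩)
    (LinearMap.toPMap_domain _ _)]
  simp [apP, LinearMap.toPMap_apply]

theorem apb_add {f g : X → 𝕜'} (hf : Measurable f) (hbf : Bdd f) (hg : Measurable g)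
    (hbg : Bdd g) (x : H') :
    Φ.apb (f + g) (hf.add hg) (hbf.add hbg) x = Φ.apb f hf hbf x + Φ.apb g hg hbg x := by
  have hle := Φ.mfc2_add f g hf hg
  have hmem : x ∈ (Φ.ap f + Φ.ap g).domain := by
    rw [LinearPMap.add_domain, Submodule.mem_inf]
    exact ⟨Φ.memDom hf hbf x, Φ.memDom hg hbg x⟩
  have := hle.2 (x := ⟨x, hmem⟩) (y := ⟨x, Φ.memDom (hf.add hg) (hbf.add hbg) x⟩) rfl
  rw [LinearPMap.add_apply] at this
  rw [← apb_def (hx := Φ.memDom (hf.add hg) (hbf.add hbg) x), ← this]; rfl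

theorem apb_smul (c : 𝕜') {f : X → 𝕜'} (hf : Measurable f) (hbf : Bdd f) (x : H') :
    Φ.apb (fun y => c * f y) (hf.const_mul c) (hbf.smul c) x = c • Φ.apb f hf hbf x := by
  have hle := Φ.mfc2_smul c f hf
  have hmem : x ∈ (c • Φ.ap f).domain := Φ.memDom hf hbf x
  have := hle.2 (x := ⟨x, hmem⟩) (y := ⟨x, Φ.memDom (hf.const_mul c) (hbf.smul c) x⟩) rfl
  rw [LinearPMap.smul_apply] at this
  rw [← apb_def (hx := Φ.memDom (hf.const_mul c) (hbf.smul c) x), ← this]; rfl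

theorem apb_mul {f g : X → 𝕜'} (hf : Measurable f) (hbf : Bdd f) (hg : Measurable g)
    (hbg : Bdd g) (x : H') :
    Φ.apb (f * g) (hf.mul hg) (hbf.mul hbg) x = Φ.apb f hf hbf (Φ.apb g hg hbg x) := by
  have hd := Φ.mfc3_dom f g hf hg
  have hmem : x ∈ ((Φ.ap f).compP (Φ.ap g)).domain := by
    rw [hd, Submodule.mem_inf]
    exact ⟨Φ.memDom hg hbg x, Φ.memDom (hf.mul hg) (hbf.mul hbg) x⟩
  obtain ⟨hx, hx2⟩ := compP_mem_domain_iff.mp hmem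
  have hv := (Φ.mfc3_le f g hf hg).2 (x := ⟨x, hmem⟩)
    (y := ⟨x, Φ.memDom (hf.mul hg) (hbf.mul hbg) x⟩) rfl
  have hv' := (compP_apply hmem hx hx2).symm.trans hv
  exact hv'.symm

/-- Multiplicativity in unbounded form. -/
theorem mul_apply {f g : X → 𝕜'} (hf : Measurable f) (hg : Measurable g) {x : H'}
    (hxg : x ∈ (Φ.ap g).domain) (hxfg : x ∈ (Φ.ap (f * g)).domain) :
    ∃ h2 : Φ.ap g ⟨x, hxg⟩ ∈ (Φ.ap f).domain,
      Φ.ap f ⟨Φ.ap g ⟨x, hxg⟩, h2⟩ = Φ.ap (f * g) ⟨x, hxfg⟩ := by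
  have hmem : x ∈ ((Φ.ap f).compP (Φ.ap g)).domain := by
    rw [Φ.mfc3_dom f g hf hg, Submodule.mem_inf]; exact ⟨hxg, hxfg⟩
  obtain ⟨hx, hx2⟩ := compP_mem_domain_iff.mp hmem
  refine ⟨hx2, ?_⟩
  have hv := (Φ.mfc3_le f g hf hg).2 (x := ⟨x, hmem⟩) (y := ⟨x, hxfg⟩) rfl
  exact (compP_apply hmem hx hx2).symm.trans hv

/-- The pairing identity for bounded functions (MFC4). -/
theorem apb_star {f : X → 𝕜'} (hf : Measurable f) (hbf : Bdd f) (x y : H') :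
    ⟪Φ.apb (fun z => starRingEnd 𝕜' (f z)) (meas_conj hf) (hbf.star) x, y⟫
      = ⟪x, Φ.apb f hf hbf y⟫ := by
  have hdense : Dense ((Φ.ap f).domain : Set H') := by
    rw [Φ.domTop hf hbf]; simp [Submodule.top_coe, dense_univ]
  have hadj := Φ.mfc4_star f hf hbf
  have hfa := (Φ.ap f).adjoint_isFormalAdjoint hdense
  rw [hadj] at hfa
  exact hfa ⟨x, Φ.memDom (meas_conj hf) hbf.star x⟩ ⟨y, Φ.memDom hf hbf y⟩

end MeasFC
namespace MeasFC

variable {𝕜' : Type*} [RCLike 𝕜'] {H' : Type*} [NormedAddCommGroup H']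
  [InnerProductSpace 𝕜' H'] [CompleteSpace H']
  {X : Type*} [MeasurableSpace X]

local notation "⟪" x ", " y "⟫" => @inner 𝕜' _ _ x y

/-- Truncation indicators. -/
def eN (f : X → 𝕜') (n : ℕ) : X → 𝕜' :=
  Set.indicator {x | ‖f x‖ ≤ n} (fun _ => 1)

theorem eN_meas {f : X → 𝕜'} (hf : Measurable f) (n : ℕ) : Measurable (eN f n) :=
  Measurable.indicator measurable_const (measurableSet_le hf.norm measurable_const)

theorem eN_norm_le (f : X → 𝕜') (n : ℕ) (x : X) : ‖eN f n x‖ ≤ 1 := by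
  by_cases h : x ∈ {x | ‖f x‖ ≤ (n : ℝ)} <;> simp [eN, Set.indicator_apply, h]

theorem eN_bdd (f : X → 𝕜') (n : ℕ) : Bdd (eN f n) := ⟨1, eN_norm_le f n⟩

theorem eN_sq (f : X → 𝕜') (n : ℕ) : eN f n * eN f n = eN f n := by
  funext x
  by_cases h : x ∈ {x | ‖f x‖ ≤ (n : ℝ)} <;> simp [eN, Set.indicator_apply, h]

theorem eN_conj (f : X → 𝕜') (n : ℕ) :
    (fun x => starRingEnd 𝕜' (eN f n x)) = eN f n := by
  funext x
  by_cases h : x ∈ {x | ‖f x‖ ≤ (n : ℝ)} <;> simp [eN, Set.indicator_apply, h]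

theorem eN_mul_bdd (f : X → 𝕜') (n : ℕ) : Bdd (f * eN f n) := by
  refine ⟨n, fun x => ?_⟩
  by_cases h : x ∈ {x | ‖f x‖ ≤ (n : ℝ)} <;>
    simp only [Pi.mul_apply, eN, Set.indicator_apply, if_pos, if_neg, h, ite_true, ite_false]
  · simpa using h
  · simp

theorem eN_tendsto (f : X → 𝕜') (x : X) :
    Filter.Tendsto (fun n => eN f n x) Filter.atTop (𝓝 1) := by
  obtain ⟨n₀, hn₀⟩ := exists_nat_ge ‖f x‖
  apply Filter.Tendsto.congr' (f₁ := fun _ => (1 : 𝕜'))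
  · filter_upwards [Filter.eventually_ge_atTop n₀] with n hn
    have : ‖f x‖ ≤ (n : ℝ) := hn₀.trans (Nat.cast_le.2 hn)
    simp [eN, Set.indicator_apply, this]
  · exact tendsto_const_nhds

theorem eN_comm (f : X → 𝕜') (n : ℕ) : eN f n * f = f * eN f n := mul_comm _ _

variable (Φ : MeasFC X 𝕜' H')

theorem mem_one (x : H') : x ∈ (Φ.ap fun _ => (1:𝕜')).domain :=
  Φ.memDom measurable_const (Bdd.const 1) x

theorem ap_one_eq (x : H') (hx : x ∈ (Φ.ap fun _ => (1:𝕜')).domain) :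
    Φ.ap (fun _ => (1:𝕜')) ⟨x, hx⟩ = x :=
  Φ.apb_one x

/-- `Φ(e_n) x → x` strongly. -/
theorem Pn_tendsto {f : X → 𝕜'} (hf : Measurable f) (x : H') :
    Filter.Tendsto (fun n => Φ.apb (eN f n) (eN_meas hf n) (eN_bdd f n) x)
      Filter.atTop (𝓝 x) := by
  set P : ℕ → H' → H' := fun n => Φ.apb (eN f n) (eN_meas hf n) (eN_bdd f n) with hP
  have h5 : Filter.Tendsto (fun n => ⟪P n x, x⟫) Filter.atTop (𝓝 ⟪x, x⟫) := by
    have := Φ.mfc5 (fun n => eN f n) (fun _ => 1) (eN_meas hf) measurable_const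
      ⟨1, fun n y => eN_norm_le f n y⟩ (eN_tendsto f) x x
      (fun n => Φ.memDom (eN_meas hf n) (eN_bdd f n) x) (Φ.mem_one x)
    rwa [Φ.ap_one_eq x] at this
  have hPP : ∀ n, ⟪P n x, P n x⟫ = ⟪x, P n x⟫ := by
    intro n
    have hm := (eN_meas hf n).mul (eN_meas hf n)
    have hb := (eN_bdd f n).mul (eN_bdd f n)
    have h3 : Φ.apb (eN f n * eN f n) hm hb x = P n (P n x) :=
      Φ.apb_mul (eN_meas hf n) (eN_bdd f n) (eN_meas hf n) (eN_bdd f n) x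
    have h2 : Φ.apb (eN f n * eN f n) hm hb x = P n x :=
      Φ.apb_congr hm hb (eN_meas hf n) (eN_bdd f n) (eN_sq f n) x
    have hproj : P n (P n x) = P n x := h3.symm.trans h2
    have hcg : Φ.apb (fun z => starRingEnd 𝕜' (eN f n z)) (meas_conj (eN_meas hf n))
        (eN_bdd f n).star x = P n x :=
      Φ.apb_congr _ _ _ _ (eN_conj f n) x
    have h1 : ⟪P n x, P n x⟫ = ⟪x, P n (P n x)⟫ :=
      (congrArg (fun t => ⟪t, P n x⟫) hcg.symm).trans
        (Φ.apb_star (eN_meas hf n) (eN_bdd f n) x (P n x))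
    rw [h1, hproj]
  have key : ∀ n, ‖P n x - x‖ ^ 2 = RCLike.re (⟪x, x⟫ - ⟪P n x, x⟫) := by
    intro n
    rw [← inner_self_eq_norm_sq (𝕜 := 𝕜'), inner_sub_sub_self, hPP n]
    congr 1
    ring
  have hnorm : Filter.Tendsto (fun n => ‖P n x - x‖ ^ 2) Filter.atTop (𝓝 0) := by
    simp_rw [key]
    have : Filter.Tendsto (fun n => ⟪x, x⟫ - ⟪P n x, x⟫) Filter.atTop (𝓝 (⟪x,x⟫ - ⟪x,x⟫)) :=
      Filter.Tendsto.const_sub _ h5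
    rw [sub_self] at this
    have h6 := (RCLike.continuous_re.tendsto 0).comp this
    simp only [Function.comp_def] at h6
    simpa using h6
  rw [tendsto_iff_norm_sub_tendsto_zero]
  have h7 := (Real.continuous_sqrt.tendsto 0).comp hnorm
  simp only [Function.comp_def, Real.sqrt_zero] at h7
  refine h7.congr fun n => ?_
  rw [Real.sqrt_sq (norm_nonneg _)]

end MeasFC
namespace MeasFC

variable {𝕜' : Type*} [RCLike 𝕜'] {H' : Type*} [NormedAddCommGroup H']
  [InnerProductSpace 𝕜' H'] [CompleteSpace H']
  {X : Type*} [MeasurableSpace X]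

local notation "⟪" x ", " y "⟫" => @inner 𝕜' _ _ x y

theorem eN_mul_bdd' (f : X → 𝕜') (n : ℕ) : Bdd (eN f n * f) := by
  rw [eN_comm]; exact eN_mul_bdd f n

variable (Φ : MeasFC X 𝕜' H')

theorem trunc_tendsto {f : X → 𝕜'} (hf : Measurable f) {x : H'} (hx : x ∈ (Φ.ap f).domain) :
    Filter.Tendsto (fun n => Φ.apb (f * eN f n) (hf.mul (eN_meas hf n)) (eN_mul_bdd f n) x)
      Filter.atTop (𝓝 (Φ.ap f ⟨x, hx⟩)) := by
  have hkey : ∀ n, Φ.apb (f * eN f n) (hf.mul (eN_meas hf n)) (eN_mul_bdd f n) x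
      = Φ.apb (eN f n) (eN_meas hf n) (eN_bdd f n) (Φ.ap f ⟨x, hx⟩) := by
    intro n
    have hxfg : x ∈ (Φ.ap (eN f n * f)).domain :=
      Φ.memDom ((eN_meas hf n).mul hf) (eN_mul_bdd' f n) x
    obtain ⟨h2, hval⟩ := Φ.mul_apply (eN_meas hf n) hf hx hxfg
    calc Φ.apb (f * eN f n) (hf.mul (eN_meas hf n)) (eN_mul_bdd f n) x
        = Φ.apb (eN f n * f) ((eN_meas hf n).mul hf) (eN_mul_bdd' f n) x :=
          (Φ.apb_congr _ _ _ _ (eN_comm f n) x).symm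
      _ = Φ.ap (eN f n * f) ⟨x, hxfg⟩ := rfl
      _ = Φ.ap (eN f n) ⟨Φ.ap f ⟨x, hx⟩, h2⟩ := hval.symm
      _ = Φ.apb (eN f n) (eN_meas hf n) (eN_bdd f n) (Φ.ap f ⟨x, hx⟩) := rfl
  exact (Φ.Pn_tendsto hf (Φ.ap f ⟨x, hx⟩)).congr fun n => (hkey n).symm

theorem trunc_closed {f : X → 𝕜'} (hf : Measurable f) {x y : H'}
    (hten : Filter.Tendsto
      (fun n => Φ.apb (f * eN f n) (hf.mul (eN_meas hf n)) (eN_mul_bdd f n) x)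
      Filter.atTop (𝓝 y)) :
    ∃ hx : x ∈ (Φ.ap f).domain, Φ.ap f ⟨x, hx⟩ = y := by
  have hgraph : ∀ n, ((Φ.apb (eN f n) (eN_meas hf n) (eN_bdd f n) x),
      Φ.apb (f * eN f n) (hf.mul (eN_meas hf n)) (eN_mul_bdd f n) x) ∈ (Φ.ap f).graph := by
    intro n
    obtain ⟨h2, hval⟩ := Φ.mul_apply hf (eN_meas hf n)
      (Φ.memDom (eN_meas hf n) (eN_bdd f n) x)
      (Φ.memDom (hf.mul (eN_meas hf n)) (eN_mul_bdd f n) x)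
    rw [LinearPMap.mem_graph_iff]
    exact ⟨⟨_, h2⟩, rfl, hval⟩
  have hcl := (Φ.isClosed f hf).mem_of_tendsto
    ((Φ.Pn_tendsto hf x).prodMk_nhds hten) (Filter.Eventually.of_forall hgraph)
  rw [SetLike.mem_coe, LinearPMap.mem_graph_iff] at hcl
  obtain ⟨⟨v, hv⟩, hv1, hv2⟩ := hcl
  cases hv1
  exact ⟨hv, hv2⟩

theorem le_of_bounded {Ψ : MeasFC X 𝕜' H'} {f : X → 𝕜'} (hf : Measurable f)
    (h : ∀ g : X → 𝕜', Measurable g → Bdd g → Φ.ap g = Ψ.ap g) : Φ.ap f ≤ Ψ.ap f := by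
  have main : ∀ (x : H') (hx : x ∈ (Φ.ap f).domain),
      ∃ hx' : x ∈ (Ψ.ap f).domain, Ψ.ap f ⟨x, hx'⟩ = Φ.ap f ⟨x, hx⟩ := by
    intro x hx
    have ht := Φ.trunc_tendsto hf hx
    have ht' : Filter.Tendsto
        (fun n => Ψ.apb (f * eN f n) (hf.mul (eN_meas hf n)) (eN_mul_bdd f n) x)
        Filter.atTop (𝓝 (Φ.ap f ⟨x, hx⟩)) := by
      refine ht.congr fun n => ?_
      exact congrFun (apP_congr (h _ (hf.mul (eN_meas hf n)) (eN_mul_bdd f n))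
        (Φ.domTop (hf.mul (eN_meas hf n)) (eN_mul_bdd f n))
        (Ψ.domTop (hf.mul (eN_meas hf n)) (eN_mul_bdd f n))) x
    exact Ψ.trunc_closed hf ht'
  refine ⟨fun x hx => (main x hx).choose, fun x y hxy => ?_⟩
  obtain ⟨hx', hval⟩ := main x x.2
  have hy : Ψ.ap f y = Ψ.ap f ⟨(x : H'), hx'⟩ := by
    congr 1; exact Subtype.ext hxy.symm
  rw [hy, hval]

theorem eq_of_bounded {Ψ : MeasFC X 𝕜' H'}
    (h : ∀ g : X → 𝕜', Measurable g → Bdd g → Φ.ap g = Ψ.ap g)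
    (f : X → 𝕜') (hf : Measurable f) : Φ.ap f = Ψ.ap f :=
  le_antisymm (Φ.le_of_bounded hf h)
    (Ψ.le_of_bounded hf fun g hg hb => (h g hg hb).symm)

/-- Formal adjointness: `⟪Φ(f) v, w⟫ = ⟪v, Φ(conj f) w⟫`. -/
theorem pairing {f g : X → 𝕜'} (hf : Measurable f)
    (hgf : g = fun x => starRingEnd 𝕜' (f x)) (v : (Φ.ap f).domain)
    (w : (Φ.ap g).domain) :
    ⟪Φ.ap f v, (w : H')⟫ = ⟪(v : H'), Φ.ap g w⟫ := by
  have hg : Measurable g := hgf ▸ meas_conj hf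
  have h1 := Φ.trunc_tendsto hf v.2
  have h2 := Φ.trunc_tendsto hg w.2
  have heN : ∀ n, eN g n = eN f n := by
    intro n; funext z
    simp [eN, hgf, Set.indicator_apply, RCLike.norm_conj]
  have hconj : ∀ n, (fun z => starRingEnd 𝕜' ((g * eN g n) z)) = f * eN f n := by
    intro n
    simp only [heN n]
    funext z
    have he := congrFun (eN_conj f n) z
    simp only [Pi.mul_apply, map_mul, hgf, RCLike.conj_conj]
    rw [he]
  have hsn : ∀ n, ⟪Φ.apb (f * eN f n) (hf.mul (eN_meas hf n)) (eN_mul_bdd f n) ↑v, (w:H')⟫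
      = ⟪(v:H'), Φ.apb (g * eN g n) (hg.mul (eN_meas hg n)) (eN_mul_bdd g n) ↑w⟫ := by
    intro n
    have hstar := Φ.apb_star (hg.mul (eN_meas hg n)) (eN_mul_bdd g n) (v:H') (w:H')
    refine Eq.trans ?_ hstar
    exact congrArg (fun t => ⟪t, (w:H')⟫)
      (Φ.apb_congr _ _ _ _ (hconj n) (v:H')).symm
  have t1 : Filter.Tendsto
      (fun n => ⟪Φ.apb (f * eN f n) (hf.mul (eN_meas hf n)) (eN_mul_bdd f n) ↑v, (w:H')⟫)
      Filter.atTop (𝓝 ⟪Φ.ap f v, (w:H')⟫) := h1.inner tendsto_const_nhds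
  have t2 : Filter.Tendsto
      (fun n => ⟪Φ.apb (f * eN f n) (hf.mul (eN_meas hf n)) (eN_mul_bdd f n) ↑v, (w:H')⟫)
      Filter.atTop (𝓝 ⟪(v:H'), Φ.ap g w⟫) :=
    Filter.Tendsto.congr (fun n => (hsn n).symm) (tendsto_const_nhds.inner h2)
  exact tendsto_nhds_unique t1 t2

end MeasFC
namespace MeasFC

variable {𝕜' : Type*} [RCLike 𝕜'] {H' : Type*} [NormedAddCommGroup H']
  [InnerProductSpace 𝕜' H'] [CompleteSpace H']
  {X : Type*} [MeasurableSpace X]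

local notation "⟪" x ", " y "⟫" => @inner 𝕜' _ _ x y

/-- Agreement of two calculi on a bounded measurable function. -/
def Agree (Φ Ψ : MeasFC X 𝕜' H') (f : X → 𝕜') : Prop :=
  Measurable f ∧ Bdd f ∧ Φ.ap f = Ψ.ap f

variable {Φ Ψ : MeasFC X 𝕜' H'}

theorem apb_eq_of {f : X → 𝕜'} (hf : Measurable f) (hb : Bdd f) (h : Φ.ap f = Ψ.ap f)
    (x : H') : Φ.apb f hf hb x = Ψ.apb f hf hb x :=
  congrFun (apP_congr h (Φ.domTop hf hb) (Ψ.domTop hf hb)) x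

theorem Agree.add {f g : X → 𝕜'} (hf : Agree Φ Ψ f) (hg : Agree Φ Ψ g) :
    Agree Φ Ψ (f + g) :=
  ⟨hf.1.add hg.1, hf.2.1.add hg.2.1,
    Φ.eq_of_apb (hf.1.add hg.1) (hf.2.1.add hg.2.1) fun x => by
      rw [Φ.apb_add hf.1 hf.2.1 hg.1 hg.2.1 x, Ψ.apb_add hf.1 hf.2.1 hg.1 hg.2.1 x,
        apb_eq_of hf.1 hf.2.1 hf.2.2 x, apb_eq_of hg.1 hg.2.1 hg.2.2 x]⟩

theorem Agree.mul {f g : X → 𝕜'} (hf : Agree Φ Ψ f) (hg : Agree Φ Ψ g) :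
    Agree Φ Ψ (f * g) :=
  ⟨hf.1.mul hg.1, hf.2.1.mul hg.2.1,
    Φ.eq_of_apb (hf.1.mul hg.1) (hf.2.1.mul hg.2.1) fun x => by
      rw [Φ.apb_mul hf.1 hf.2.1 hg.1 hg.2.1 x, Ψ.apb_mul hf.1 hf.2.1 hg.1 hg.2.1 x,
        apb_eq_of hg.1 hg.2.1 hg.2.2 x, apb_eq_of hf.1 hf.2.1 hf.2.2 _]⟩

theorem Agree.smul (c : 𝕜') {f : X → 𝕜'} (hf : Agree Φ Ψ f) :
    Agree Φ Ψ (fun x => c * f x) :=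
  ⟨hf.1.const_mul c, hf.2.1.smul c,
    Φ.eq_of_apb (hf.1.const_mul c) (hf.2.1.smul c) fun x => by
      rw [Φ.apb_smul c hf.1 hf.2.1 x, Ψ.apb_smul c hf.1 hf.2.1 x,
        apb_eq_of hf.1 hf.2.1 hf.2.2 x]⟩

theorem Agree.one : Agree Φ Ψ (fun _ : X => (1 : 𝕜')) :=
  ⟨measurable_const, Bdd.const 1,
    Φ.eq_of_apb measurable_const (Bdd.const 1) fun x => by
      rw [Φ.apb_congr measurable_const (Bdd.const 1) measurable_const ⟨1, fun _ => by simp⟩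
          rfl x,
        Ψ.apb_congr measurable_const (Bdd.const 1) measurable_const ⟨1, fun _ => by simp⟩
          rfl x, Φ.apb_one, Ψ.apb_one]⟩

theorem Agree.congr {f g : X → 𝕜'} (hf : Agree Φ Ψ f) (h : f = g) : Agree Φ Ψ g := h ▸ hf

theorem Agree.const (c : 𝕜') : Agree Φ Ψ (fun _ : X => c) :=
  (Agree.smul c Agree.one).congr (by funext x; simp)

theorem Agree.sub {f g : X → 𝕜'} (hf : Agree Φ Ψ f) (hg : Agree Φ Ψ g) :
    Agree Φ Ψ (f - g) :=
  (hf.add (Agree.smul (-1) hg)).congr (by funext x; simp [Pi.sub_apply]; ring)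

theorem Agree.star {f : X → 𝕜'} (hf : Agree Φ Ψ f) :
    Agree Φ Ψ (fun x => starRingEnd 𝕜' (f x)) :=
  ⟨meas_conj hf.1, hf.2.1.star, by
    rw [← Φ.mfc4_star f hf.1 hf.2.1, ← Ψ.mfc4_star f hf.1 hf.2.1, hf.2.2]⟩

theorem Agree.limit {u : ℕ → X → 𝕜'} {f : X → 𝕜'} (hu : ∀ n, Agree Φ Ψ (u n))
    (hC : ∃ C, ∀ n x, ‖u n x‖ ≤ C)
    (hten : ∀ x, Filter.Tendsto (fun n => u n x) Filter.atTop (𝓝 (f x))) :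
    Agree Φ Ψ f := by
  obtain ⟨C, hCb⟩ := hC
  have hf : Measurable f := measurable_of_tendsto_metrizable (fun n => (hu n).1)
    (tendsto_pi_nhds.mpr hten)
  have hb : Bdd f := ⟨C, fun x => le_of_tendsto ((hten x).norm)
    (Filter.Eventually.of_forall fun n => hCb n x)⟩
  refine ⟨hf, hb, Φ.eq_of_apb hf hb fun x => ?_⟩
  apply ext_inner_right 𝕜'
  intro y
  have w1 := Φ.mfc5 u f (fun n => (hu n).1) hf ⟨C, hCb⟩ hten x y
    (fun n => Φ.memDom (hu n).1 ⟨C, hCb n⟩ x) (Φ.memDom hf hb x)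
  have w2 := Ψ.mfc5 u f (fun n => (hu n).1) hf ⟨C, hCb⟩ hten x y
    (fun n => Ψ.memDom (hu n).1 ⟨C, hCb n⟩ x) (Ψ.memDom hf hb x)
  have heq : ∀ n, ⟪Φ.ap (u n) ⟨x, Φ.memDom (hu n).1 ⟨C, hCb n⟩ x⟩, y⟫
      = ⟪Ψ.ap (u n) ⟨x, Ψ.memDom (hu n).1 ⟨C, hCb n⟩ x⟩, y⟫ := fun n =>
    congrArg (fun t => ⟪t, y⟫) (apb_eq_of (hu n).1 ⟨C, hCb n⟩ (hu n).2.2 x)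
  exact tendsto_nhds_unique w1 ((w2.congr fun n => (heq n).symm))

theorem Agree.ind_compl {A : Set X}
    (h : Agree Φ Ψ (A.indicator fun _ => (1 : 𝕜'))) :
    Agree Φ Ψ (Aᶜ.indicator fun _ => (1 : 𝕜')) := by
  refine ((Agree.one).sub h).congr ?_
  funext x
  by_cases hx : x ∈ A <;> simp [Set.indicator_apply, hx]

theorem Agree.ind_union {A B : Set X}
    (hA : Agree Φ Ψ (A.indicator fun _ => (1 : 𝕜')))
    (hB : Agree Φ Ψ (B.indicator fun _ => (1 : 𝕜'))) :
    Agree Φ Ψ ((A ∪ B).indicator fun _ => (1 : 𝕜')) := by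
  refine ((hA.add hB).sub (hA.mul hB)).congr ?_
  funext x
  by_cases hx : x ∈ A <;> by_cases hy : x ∈ B <;>
    simp [Set.indicator_apply, hx, hy]

theorem Agree.ind_iUnion {A : ℕ → Set X}
    (h : ∀ n, Agree Φ Ψ ((A n).indicator fun _ => (1 : 𝕜'))) :
    Agree Φ Ψ ((⋃ n, A n).indicator fun _ => (1 : 𝕜')) := by
  have hacc : ∀ n, Agree Φ Ψ ((Set.accumulate A n).indicator fun _ => (1 : 𝕜')) := by
    intro n
    induction n with
    | zero =>
      refine (h 0).congr ?_
      have : Set.accumulate A 0 = A 0 := by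
        ext z; simp [Set.mem_accumulate, Nat.le_zero]
      rw [this]
    | succ n ih =>
      refine (ih.ind_union (h (n+1))).congr ?_
      have : Set.accumulate A n ∪ A (n+1) = Set.accumulate A (n+1) := by
        ext z
        simp only [Set.mem_union, Set.mem_accumulate, Nat.le_add_one_iff]
        constructor
        · rintro (⟨y, hy, hz⟩ | hz)
          · exact ⟨y, Or.inl hy, hz⟩
          · exact ⟨n+1, Or.inr rfl, hz⟩
        · rintro ⟨y, hy | rfl, hz⟩
          · exact Or.inl ⟨y, hy, hz⟩
          · exact Or.inr hz
      rw [this]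
  refine Agree.limit hacc ⟨1, fun n x => ?_⟩ fun x => ?_
  · by_cases hx : x ∈ Set.accumulate A n <;> simp [Set.indicator_apply, hx]
  · by_cases hx : x ∈ ⋃ n, A n
    · obtain ⟨i, hi⟩ := Set.mem_iUnion.mp hx
      rw [show (⋃ n, A n).indicator (fun _ => (1:𝕜')) x = 1 by simp [Set.indicator_apply, hx]]
      apply Filter.Tendsto.congr' (f₁ := fun _ => (1:𝕜')) _ tendsto_const_nhds
      filter_upwards [Filter.eventually_ge_atTop i] with n hn
      have : x ∈ Set.accumulate A n := Set.monotone_accumulate hn (Set.subset_accumulate hi)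
      simp [Set.indicator_apply, this]
    · rw [show (⋃ n, A n).indicator (fun _ => (1:𝕜')) x = 0 by simp [Set.indicator_apply, hx]]
      apply Filter.Tendsto.congr' (f₁ := fun _ => (0:𝕜')) _ tendsto_const_nhds
      filter_upwards with n
      have : x ∉ Set.accumulate A n := fun hc =>
        hx (Set.accumulate_subset_iUnion n hc)
      simp [Set.indicator_apply, this]

end MeasFC
namespace MeasFC

variable {𝕜' : Type*} [RCLike 𝕜']
  {H' : Type*} [NormedAddCommGroup H']
  [InnerProductSpace 𝕜' H'] [CompleteSpace H']
  {X : Type*} [MeasurableSpace X]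

variable {Φ Ψ : MeasFC X 𝕜' H'}

theorem agree_of_generators {m : ℕ} (G : Fin m → (X → 𝕜')) (hG : ∀ i, Agree Φ Ψ (G i))
    (hsep : ∀ A : Set X, MeasurableSet A →
      ∃ s : Set (Fin m → 𝕜'), MeasurableSet s ∧ A = (fun x i => G i x) ⁻¹' s) :
    ∀ f : X → 𝕜', Measurable f → Φ.ap f = Ψ.ap f := by
  classical
  set g : X → (Fin m → 𝕜') := fun x i => G i x with hgdef
  have hgm : Measurable g := measurable_pi_lambda _ fun i => (hG i).1
  choose C hC using fun i => (hG i).2.1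
  set R : ℝ := ∑ i, max (C i) 0 with hRdef
  have hR0 : 0 ≤ R := Finset.sum_nonneg fun i _ => le_max_right _ _
  have hgR : ∀ x, ‖g x‖ ≤ R := by
    intro x
    rw [pi_norm_le_iff_of_nonneg hR0]
    intro i
    calc ‖g x i‖ ≤ C i := hC i x
    _ ≤ max (C i) 0 := le_max_left _ _
    _ ≤ R := Finset.single_le_sum (f := fun i => max (C i) 0)
        (fun j _ => le_max_right _ _) (Finset.mem_univ i)
  set K : Set (Fin m → 𝕜') := Metric.closedBall 0 R with hKdef
  have hKc : IsCompact K := isCompact_closedBall 0 R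
  haveI : CompactSpace K := isCompact_iff_compactSpace.mp hKc
  have hgK : ∀ x, g x ∈ K := fun x => by
    rw [hKdef, Metric.mem_closedBall, dist_zero_right]; exact hgR x
  set gK : X → K := fun x => ⟨g x, hgK x⟩ with hgKdef
  have hgKm : Measurable gK := hgm.subtype_mk
  -- coordinate functions on K
  set coord : Fin m → C(K, 𝕜') := fun i =>
    ContinuousMap.mk (fun w : K => (w : Fin m → 𝕜') i)
      ((continuous_apply i).comp continuous_subtype_val) with hcoord
  set A : StarSubalgebra 𝕜' C(K, 𝕜') := StarAlgebra.adjoin 𝕜' (Set.range coord) with hA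
  -- every element of the star algebra is in the agreement set
  have halg : ∀ p ∈ A, Agree Φ Ψ (fun x => p (gK x)) := by
    intro p hp
    induction hp using StarAlgebra.adjoin_induction with
    | mem q hq =>
      obtain ⟨i, rfl⟩ := hq
      exact hG i
    | algebraMap c =>
      exact (Agree.const c).congr (by funext x; rw [Algebra.algebraMap_eq_smul_one]; simp)
    | add q r hq hr ihq ihr => exact ihq.add ihr
    | mul q r hq hr ihq ihr => exact ihq.mul ihr
    | star q hq ihq => exact ihq.star
  -- separation of points
  have hsepA : A.SeparatesPoints := by
    intro w w' hne
    have : ∃ i, (w : Fin m → 𝕜') i ≠ (w' : Fin m → 𝕜') i := by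
      by_contra hcon
      push_neg at hcon
      exact hne (Subtype.ext (funext hcon))
    obtain ⟨i, hi⟩ := this
    exact ⟨coord i, ⟨coord i, StarAlgebra.subset_adjoin 𝕜' _ ⟨i, rfl⟩, rfl⟩, hi⟩
  -- all continuous functions on K
  have hcont : ∀ p : C(K, 𝕜'), Agree Φ Ψ (fun x => p (gK x)) := by
    intro p
    have htop := ContinuousMap.starSubalgebra_topologicalClosure_eq_top_of_separatesPoints A hsepA
    have hmemcl : p ∈ closure (A : Set C(K, 𝕜')) := by
      have : p ∈ A.topologicalClosure := by rw [htop]; trivial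
      exact this
    obtain ⟨u, hu_mem, hu_tend⟩ := mem_closure_iff_seq_limit.mp hmemcl
    obtain ⟨N, hN⟩ : ∃ N, ∀ n ≥ N, dist (u n) p ≤ 1 := by
      obtain ⟨N, hN⟩ := (Metric.tendsto_atTop.mp hu_tend) 1 one_pos
      exact ⟨N, fun n hn => (hN n hn).le⟩
    have hu_tend' : Filter.Tendsto (fun n => u (n + N)) Filter.atTop (𝓝 p) :=
      hu_tend.comp (Filter.tendsto_add_atTop_nat N)
    refine Agree.limit (u := fun n x => (u (n + N)) (gK x))
      (fun n => halg _ (hu_mem (n + N))) ⟨‖p‖ + 1, fun n x => ?_⟩ fun x => ?_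
    · have h1 : ‖u (n + N) (gK x)‖ ≤ ‖p (gK x)‖ + dist (u (n + N) (gK x)) (p (gK x)) := by
        rw [dist_eq_norm]
        calc ‖u (n + N) (gK x)‖ = ‖p (gK x) + (u (n + N) (gK x) - p (gK x))‖ := by ring_nf
        _ ≤ ‖p (gK x)‖ + ‖u (n + N) (gK x) - p (gK x)‖ := norm_add_le _ _
      refine h1.trans (add_le_add (p.norm_coe_le_norm (gK x)) ?_)
      exact (ContinuousMap.dist_apply_le_dist (gK x)).trans (hN (n + N) (Nat.le_add_left N n))
    · rw [tendsto_iff_dist_tendsto_zero]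
      have hd : Filter.Tendsto (fun n => dist (u (n + N)) p) Filter.atTop (𝓝 0) :=
        tendsto_iff_dist_tendsto_zero.mp hu_tend'
      exact squeeze_zero (fun n => dist_nonneg)
        (fun n => ContinuousMap.dist_apply_le_dist (gK x)) hd
  -- indicators of closed sets
  have hclosed : ∀ s : Set (Fin m → 𝕜'), IsClosed s →
      Agree Φ Ψ ((g ⁻¹' s).indicator fun _ => (1 : 𝕜')) := by
    intro s hs
    rcases Set.eq_empty_or_nonempty s with rfl | hne
    · exact (Agree.const 0).congr (by funext x; simp)
    · -- approximate by continuous functions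
      set φ : ℕ → C(K, 𝕜') := fun k =>
        ContinuousMap.mk
          (fun w => ((max (1 - k * Metric.infDist (w : Fin m → 𝕜') s) 0 : ℝ) : 𝕜'))
          (by
            apply RCLike.continuous_ofReal.comp
            apply Continuous.max _ continuous_const
            exact (continuous_const.sub (continuous_const.mul
              ((Metric.continuous_infDist_pt s).comp continuous_subtype_val)))) with hφ
      refine Agree.limit (u := fun k x => (φ k) (gK x))
        (fun k => hcont (φ k)) ⟨1, fun k x => ?_⟩ fun x => ?_
      · simp only [hφ, ContinuousMap.coe_mk]
        rw [RCLike.norm_ofReal, abs_le]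
        constructor
        · linarith [le_max_right (1 - k * Metric.infDist (g x) s) (0:ℝ)]
        · apply max_le _ zero_le_one
          have : 0 ≤ (k : ℝ) * Metric.infDist (g x) s :=
            mul_nonneg (Nat.cast_nonneg k) Metric.infDist_nonneg
          linarith
      · by_cases hx : g x ∈ s
        · have hval : (g ⁻¹' s).indicator (fun _ => (1:𝕜')) x = 1 := by
            simp [Set.indicator_apply, hx]
          rw [hval]
          apply Filter.Tendsto.congr' (f₁ := fun _ => (1:𝕜')) _ tendsto_const_nhds
          filter_upwards with k
          simp [hφ, show ((gK x : K) : Fin m → 𝕜') = g x from rfl, Metric.infDist_zero_of_mem hx]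
        · have hval : (g ⁻¹' s).indicator (fun _ => (1:𝕜')) x = 0 := by
            simp [Set.indicator_apply, hx]
          rw [hval]
          have hpos : 0 < Metric.infDist (g x) s := by
            rw [← hs.notMem_iff_infDist_pos hne]; exact hx
          apply Filter.Tendsto.congr' (f₁ := fun _ => (0:𝕜')) _ tendsto_const_nhds
          obtain ⟨k₀, hk₀⟩ := exists_nat_ge (1 / Metric.infDist (g x) s)
          filter_upwards [Filter.eventually_ge_atTop k₀] with k hk
          have hbig : 1 ≤ (k : ℝ) * Metric.infDist (g x) s := by
            have : (1 / Metric.infDist (g x) s) * Metric.infDist (g x) s ≤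
                (k : ℝ) * Metric.infDist (g x) s := by
              apply mul_le_mul_of_nonneg_right _ Metric.infDist_nonneg
              exact hk₀.trans (Nat.cast_le.2 hk)
            rwa [one_div, inv_mul_cancel₀ hpos.ne'] at this
          have : max (1 - (k:ℝ) * Metric.infDist (g x) s) 0 = 0 :=
            max_eq_right (by linarith)
          simp [hφ, show ((gK x : K) : Fin m → 𝕜') = g x from rfl, this]
  -- the sets whose indicator is in the agreement class form a σ-algebra
  have hD : ∀ s : Set (Fin m → 𝕜'), MeasurableSet s →
      Agree Φ Ψ ((g ⁻¹' s).indicator fun _ => (1 : 𝕜')) := by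
    set D : MeasurableSpace (Fin m → 𝕜') :=
      { MeasurableSet' := fun s => Agree Φ Ψ ((g ⁻¹' s).indicator fun _ => (1 : 𝕜'))
        measurableSet_empty := (Agree.const 0).congr (by funext x; simp)
        measurableSet_compl := fun s hs => by
          have := hs.ind_compl
          rwa [← Set.preimage_compl] at this
        measurableSet_iUnion := fun s hs => by
          have := Agree.ind_iUnion (A := fun n => g ⁻¹' (s n)) hs
          rwa [← Set.preimage_iUnion] at this } with hDdef
    intro s hs
    have hle : (MeasurableSpace.pi : MeasurableSpace (Fin m → 𝕜')) ≤ D := by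
      have hb : (MeasurableSpace.pi : MeasurableSpace (Fin m → 𝕜')) = borel _ :=
        BorelSpace.measurable_eq
      rw [hb, borel_eq_generateFrom_isClosed]
      exact MeasurableSpace.generateFrom_le fun t ht => hclosed t ht
    exact hle s hs
  -- indicators of measurable sets of X
  have hind : ∀ A : Set X, MeasurableSet A →
      Agree Φ Ψ (A.indicator fun _ => (1 : 𝕜')) := by
    intro A hA
    obtain ⟨s, hs, rfl⟩ := hsep A hA
    exact hD s hs
  -- simple functions
  have hsimple : ∀ φ : MeasureTheory.SimpleFunc X 𝕜', Agree Φ Ψ ⇑φ := by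
    intro φ
    induction φ using MeasureTheory.SimpleFunc.induction with
    | const c hs =>
      rename_i s
      refine ((hind s hs).smul c).congr ?_
      funext x
      by_cases hx : x ∈ s <;>
        simp [MeasureTheory.SimpleFunc.coe_piecewise, MeasureTheory.SimpleFunc.coe_const,
          Set.indicator_apply, Set.piecewise, hx]
    | add hdis hf' hg' =>
      exact (hf'.add hg').congr (by rw [MeasureTheory.SimpleFunc.coe_add])
  -- all bounded measurable functions
  have hbdd : ∀ f : X → 𝕜', Measurable f → Bdd f → Φ.ap f = Ψ.ap f := by
    intro f hf hb
    obtain ⟨Cf, hCf⟩ := hb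
    haveI : TopologicalSpace.SeparableSpace (Set.univ : Set 𝕜') := by infer_instance
    set u : ℕ → MeasureTheory.SimpleFunc X 𝕜' := fun n =>
      MeasureTheory.SimpleFunc.approxOn f hf Set.univ 0 (Set.mem_univ 0) n with hu
    have : Agree Φ Ψ f := by
      refine Agree.limit (u := fun n => ⇑(u n)) (fun n => hsimple (u n))
        ⟨Cf + Cf, fun n x => ?_⟩ fun x => ?_
      · have := MeasureTheory.SimpleFunc.norm_approxOn_zero_le hf (Set.mem_univ 0) x n
        exact this.trans (add_le_add (hCf x) (hCf x))
      · apply MeasureTheory.SimpleFunc.tendsto_approxOn hf (Set.mem_univ 0)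
        simp
    exact this.2.2
  exact Φ.eq_of_bounded hbdd

end MeasFC
namespace MeasFC

variable {𝕜' : Type*} [RCLike 𝕜'] {H' : Type*} [NormedAddCommGroup H']
  [InnerProductSpace 𝕜' H'] [CompleteSpace H']
  {X : Type*} [MeasurableSpace X]

theorem Bdd.sum {ι : Type*} (s : Finset ι) (F : ι → X → 𝕜') (hb : ∀ i, Bdd (F i)) :
    Bdd (fun x => ∑ i ∈ s, F i x) := by
  classical
  induction s using Finset.induction with
  | empty => exact ⟨0, fun x => by simp⟩
  | @insert a t hni ih =>
    obtain ⟨C, hC⟩ := hb a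
    obtain ⟨D, hD⟩ := ih
    refine ⟨C + D, fun x => ?_⟩
    simp only [Finset.sum_insert hni]
    exact (norm_add_le _ _).trans (add_le_add (hC x) (hD x))

variable (Φ : MeasFC X 𝕜' H')

theorem apb_one' (hm : Measurable (fun _ : X => (1:𝕜'))) (hb : Bdd (fun _ : X => (1:𝕜')))
    (x : H') : Φ.apb (fun _ => 1) hm hb x = x :=
  (Φ.apb_congr hm hb measurable_const ⟨1, fun _ => by simp⟩ rfl x).trans (Φ.apb_one x)

theorem apb_const (c : 𝕜') (hm : Measurable (fun _ : X => c)) (hb : Bdd (fun _ : X => c))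
    (x : H') : Φ.apb (fun _ => c) hm hb x = c • x := by
  have h2 : Φ.apb (fun _ => c) hm hb x
      = Φ.apb (fun y => c * (fun _ : X => (1:𝕜')) y) (measurable_const.const_mul c)
        ((Bdd.const 1).smul c) x :=
    Φ.apb_congr _ _ _ _ (by funext y; simp) x
  rw [h2, Φ.apb_smul c measurable_const (Bdd.const 1) x, Φ.apb_one']

theorem apb_zero (hm : Measurable (fun _ : X => (0:𝕜'))) (hb : Bdd (fun _ : X => (0:𝕜')))
    (x : H') : Φ.apb (fun _ => 0) hm hb x = 0 := by
  rw [Φ.apb_const 0 hm hb x, zero_smul]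

theorem apb_sum {ι : Type*} (s : Finset ι) (F : ι → X → 𝕜') (hm : ∀ i, Measurable (F i))
    (hb : ∀ i, Bdd (F i)) (hms : Measurable (fun x => ∑ i ∈ s, F i x))
    (hbs : Bdd (fun x => ∑ i ∈ s, F i x)) (y : H') :
    Φ.apb (fun x => ∑ i ∈ s, F i x) hms hbs y = ∑ i ∈ s, Φ.apb (F i) (hm i) (hb i) y := by
  classical
  induction s using Finset.induction with
  | empty =>
    rw [Finset.sum_empty]
    have : Φ.apb (fun x => ∑ i ∈ (∅ : Finset ι), F i x) hms hbs y
        = Φ.apb (fun _ => 0) measurable_const ⟨0, fun x => by simp⟩ y :=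
      Φ.apb_congr _ _ _ _ (by funext x; simp) y
    rw [this]
    exact Φ.apb_zero _ _ y
  | @insert a t hni ih =>
    have hmt : Measurable (fun x => ∑ i ∈ t, F i x) := by
      apply Finset.measurable_sum; exact fun i _ => hm i
    have hbt : Bdd (fun x => ∑ i ∈ t, F i x) := Bdd.sum t F hb
    have hstep : Φ.apb (fun x => ∑ i ∈ insert a t, F i x) hms hbs y
        = Φ.apb (F a + fun x => ∑ i ∈ t, F i x) ((hm a).add hmt) ((hb a).add hbt) y :=
      Φ.apb_congr _ _ _ _ (by funext x; simp [Finset.sum_insert hni]) y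
    rw [Finset.sum_insert hni, hstep, Φ.apb_add (hm a) (hb a) hmt hbt y, ih hmt hbt]

end MeasFC
section Concrete

open MeasFC

variable {𝕜 : Type*} [RCLike 𝕜] {d : ℕ}

/-- Coordinate function. -/
def zf (Xs : Set (Fin d → 𝕜)) (j : Fin d) : ↥Xs → 𝕜 := fun x => (x : Fin d → 𝕜) j

/-- `1 + |z|²`. -/
def hKf (Xs : Set (Fin d → 𝕜)) : ↥Xs → ℝ := fun x => 1 + ∑ i, ‖(x : Fin d → 𝕜) i‖ ^ 2

/-- `(1 + |z|²)⁻¹`. -/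
def rf (Xs : Set (Fin d → 𝕜)) : ↥Xs → 𝕜 := fun x => ((hKf Xs x : ℝ) : 𝕜)⁻¹

/-- `z_j/(1 + |z|²)` (in division form, as in the statement). -/
def wf (Xs : Set (Fin d → 𝕜)) (j : Fin d) : ↥Xs → 𝕜 :=
  fun x => zf Xs j x / ((hKf Xs x : ℝ) : 𝕜)

/-- `z_j/(1 + |z|²)^{1/2}`. -/
def sf (Xs : Set (Fin d → 𝕜)) (j : Fin d) : ↥Xs → 𝕜 :=
  fun x => zf Xs j x / ((Real.sqrt (hKf Xs x) : ℝ) : 𝕜)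

/-- Conjugate coordinate. -/
def czf (Xs : Set (Fin d → 𝕜)) (j : Fin d) : ↥Xs → 𝕜 :=
  fun y => starRingEnd 𝕜 (zf Xs j y)

/-- `z_j · r` in product form. -/
def zrf (Xs : Set (Fin d → 𝕜)) (j : Fin d) : ↥Xs → 𝕜 := zf Xs j * rf Xs

/-- `conj z_j · z_j · r`. -/
def qf (Xs : Set (Fin d → 𝕜)) (j : Fin d) : ↥Xs → 𝕜 := czf Xs j * zrf Xs j

variable {Xs : Set (Fin d → 𝕜)}

theorem hK_ge_one (x : ↥Xs) : 1 ≤ hKf Xs x :=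
  le_add_of_nonneg_right (Finset.sum_nonneg fun i _ => sq_nonneg _)

theorem hK_pos (x : ↥Xs) : 0 < hKf Xs x := lt_of_lt_of_le one_pos (hK_ge_one x)

theorem hK_ne (x : ↥Xs) : ((hKf Xs x : ℝ) : 𝕜) ≠ 0 :=
  RCLike.ofReal_ne_zero.mpr (hK_pos x).ne'

theorem norm_ofReal_hK (x : ↥Xs) : ‖((hKf Xs x : ℝ) : 𝕜)‖ = hKf Xs x := by
  rw [RCLike.norm_ofReal, abs_of_pos (hK_pos x)]

theorem norm_z_sq_le (j : Fin d) (x : ↥Xs) : ‖zf Xs j x‖ ^ 2 ≤ hKf Xs x := by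
  have h := Finset.single_le_sum (f := fun i => ‖(x : Fin d → 𝕜) i‖ ^ 2)
    (fun i _ => sq_nonneg _) (Finset.mem_univ j)
  have h' : ‖(x : Fin d → 𝕜) j‖ ^ 2 ≤ ∑ i, ‖(x : Fin d → 𝕜) i‖ ^ 2 := by simpa using h
  unfold zf hKf
  linarith

theorem norm_z_le (j : Fin d) (x : ↥Xs) : ‖zf Xs j x‖ ≤ hKf Xs x := by
  by_cases h : ‖zf Xs j x‖ ≤ 1
  · exact h.trans (hK_ge_one x)
  · push_neg at h
    have h2 : ‖zf Xs j x‖ ≤ ‖zf Xs j x‖ ^ 2 := by nlinarith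
    exact h2.trans (norm_z_sq_le j x)

theorem meas_z (j : Fin d) : Measurable (zf Xs j) :=
  (measurable_pi_apply j).comp measurable_subtype_coe

theorem meas_hK : Measurable (hKf Xs) :=
  measurable_const.add <| Finset.measurable_sum _ fun i _ =>
    (((measurable_pi_apply i).comp measurable_subtype_coe).norm).pow_const 2

theorem meas_hKc : Measurable fun x : ↥Xs => ((hKf Xs x : ℝ) : 𝕜) :=
  RCLike.measurable_ofReal.comp meas_hK

theorem meas_r : Measurable (rf Xs) := meas_hKc.inv

theorem meas_w (j : Fin d) : Measurable (wf Xs j) := (meas_z j).div meas_hKc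

theorem meas_s (j : Fin d) : Measurable (sf Xs j) :=
  (meas_z j).div (RCLike.measurable_ofReal.comp (Real.continuous_sqrt.measurable.comp meas_hK))

theorem meas_cz (j : Fin d) : Measurable (czf Xs j) := meas_conj (meas_z j)

theorem meas_zr (j : Fin d) : Measurable (zrf Xs j) := (meas_z j).mul meas_r

theorem meas_q (j : Fin d) : Measurable (qf Xs j) := (meas_cz j).mul (meas_zr j)

theorem bdd_r : Bdd (rf Xs) := by
  refine ⟨1, fun x => ?_⟩
  rw [rf, norm_inv, norm_ofReal_hK]
  rw [inv_le_one_iff₀]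
  right
  exact hK_ge_one x

theorem bdd_zr (j : Fin d) : Bdd (zrf Xs j) := by
  refine ⟨1, fun x => ?_⟩
  show ‖zf Xs j x * rf Xs x‖ ≤ 1
  rw [norm_mul, rf, norm_inv, norm_ofReal_hK, ← div_eq_mul_inv, div_le_one (hK_pos x)]
  exact norm_z_le j x

theorem bdd_w (j : Fin d) : Bdd (wf Xs j) := by
  refine ⟨1, fun x => ?_⟩
  rw [wf, norm_div, norm_ofReal_hK, div_le_one (hK_pos x)]
  exact norm_z_le j x

theorem bdd_s (j : Fin d) : Bdd (sf Xs j) := by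
  refine ⟨1, fun x => ?_⟩
  rw [sf, norm_div, RCLike.norm_ofReal, abs_of_nonneg (Real.sqrt_nonneg _),
    div_le_one (Real.sqrt_pos.mpr (hK_pos x))]
  have h1 : ‖zf Xs j x‖ = Real.sqrt (‖zf Xs j x‖ ^ 2) := (Real.sqrt_sq (norm_nonneg _)).symm
  rw [h1]
  exact Real.sqrt_le_sqrt (norm_z_sq_le j x)

theorem bdd_q (j : Fin d) : Bdd (qf Xs j) := by
  refine ⟨1, fun x => ?_⟩
  show ‖czf Xs j x * (zf Xs j x * rf Xs x)‖ ≤ 1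
  rw [norm_mul, norm_mul, czf, RCLike.norm_conj, rf, norm_inv, norm_ofReal_hK,
    ← mul_assoc, ← sq]
  rw [← div_eq_mul_inv, div_le_one (hK_pos x)]
  exact norm_z_sq_le j x

/-- If the generators admit a measurable retraction onto the coordinates, preimages
under the generator map exhaust the σ-algebra. -/
theorem sep_of_retract {m : ℕ} (G : Fin m → (↥Xs → 𝕜))
    (F : (Fin m → 𝕜) → (Fin d → 𝕜)) (hF : Measurable F)
    (hFG : ∀ x : ↥Xs, F (fun i => G i x) = (x : Fin d → 𝕜)) :
    ∀ A : Set ↥Xs, MeasurableSet A →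
      ∃ s : Set (Fin m → 𝕜), MeasurableSet s ∧ A = (fun x i => G i x) ⁻¹' s := by
  intro A hA
  obtain ⟨t, ht, hAt⟩ := MeasurableSpace.measurableSet_comap.mp hA
  refine ⟨F ⁻¹' t, hF ht, ?_⟩
  rw [← hAt]
  ext x
  simp only [Set.mem_preimage, hFG x]

end Concrete
section Cases

open MeasFC

variable {𝕜 : Type*} [RCLike 𝕜] {H : Type*} [NormedAddCommGroup H]
  [InnerProductSpace 𝕜 H] [CompleteSpace H]
  {d : ℕ} {Xs : Set (Fin d → 𝕜)}

theorem case2 (Φ Ψ : MeasFC ↥Xs 𝕜 H)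
    (hw : ∀ j, Φ.ap (wf Xs j) = Ψ.ap (wf Xs j)) (hr : Φ.ap (rf Xs) = Ψ.ap (rf Xs)) :
    ∀ f : ↥Xs → 𝕜, Measurable f → Φ.ap f = Ψ.ap f := by
  apply agree_of_generators (m := d + 1) (Fin.cons (rf Xs) (wf Xs))
  · intro i
    refine Fin.cases ?_ ?_ i
    · show Agree Φ Ψ (rf Xs)
      exact ⟨meas_r, bdd_r, hr⟩
    · intro j
      show Agree Φ Ψ (wf Xs j)
      exact ⟨meas_w j, bdd_w j, hw j⟩
  · apply sep_of_retract _ (fun v j => v j.succ * (v 0)⁻¹)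
    · exact measurable_pi_lambda _ fun j =>
        (measurable_pi_apply j.succ).mul (measurable_pi_apply 0).inv
    · intro x
      funext j
      show wf Xs j x * (rf Xs x)⁻¹ = (x : Fin d → 𝕜) j
      rw [wf, rf, inv_inv, div_mul_cancel₀ _ (hK_ne x)]
      rfl

theorem case3 (Φ Ψ : MeasFC ↥Xs 𝕜 H)
    (hs : ∀ j, Φ.ap (sf Xs j) = Ψ.ap (sf Xs j)) :
    ∀ f : ↥Xs → 𝕜, Measurable f → Φ.ap f = Ψ.ap f := by
  apply agree_of_generators (m := d) (sf Xs)
  · exact fun j => ⟨meas_s j, bdd_s j, hs j⟩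
  · apply sep_of_retract _
      (fun v j => v j * (((Real.sqrt (1 - ∑ i, ‖v i‖ ^ 2) : ℝ) : 𝕜))⁻¹)
    · exact measurable_pi_lambda _ fun j =>
        (measurable_pi_apply j).mul
          ((RCLike.measurable_ofReal.comp (Real.continuous_sqrt.measurable.comp
            (measurable_const.sub (Finset.measurable_sum _ fun i _ =>
              ((measurable_pi_apply i).norm).pow_const 2)))).inv)
    · intro x
      funext j
      show sf Xs j x * (((Real.sqrt (1 - ∑ i, ‖sf Xs i x‖ ^ 2) : ℝ) : 𝕜))⁻¹
          = (x : Fin d → 𝕜) j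
      have ha := hK_pos (Xs := Xs) x
      have hsq : ∀ i, ‖sf Xs i x‖ ^ 2 = ‖zf Xs i x‖ ^ 2 / hKf Xs x := by
        intro i
        rw [sf, norm_div, RCLike.norm_ofReal, abs_of_nonneg (Real.sqrt_nonneg _),
          div_pow, Real.sq_sqrt ha.le]
      have hsum : (1 : ℝ) - ∑ i, ‖sf Xs i x‖ ^ 2 = (hKf Xs x)⁻¹ := by
        simp_rw [hsq]
        rw [← Finset.sum_div]
        have : (∑ i, ‖zf Xs i x‖ ^ 2) = hKf Xs x - 1 := by
          rw [hKf]; ring_nf; rfl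
        rw [this]
        field_simp
        ring
      rw [hsum, Real.sqrt_inv, RCLike.ofReal_inv, inv_inv, sf]
      rw [div_mul_cancel₀]
      · rfl
      · rw [ne_eq, RCLike.ofReal_eq_zero]
        exact (Real.sqrt_pos.mpr ha).ne'

end Cases
section Case1

open MeasFC

theorem pmap_congr {R E F : Type*} [Ring R] [AddCommGroup E] [Module R E] [AddCommGroup F]
    [Module R F] {T S : E →ₗ.[R] F} (h : T = S) {x : E} (hx : x ∈ T.domain)
    (hx' : x ∈ S.domain) : T ⟨x, hx⟩ = S ⟨x, hx'⟩ := by cases h; rfl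

variable {𝕜 : Type*} [RCLike 𝕜] {H : Type*} [NormedAddCommGroup H]
  [InnerProductSpace 𝕜 H] [CompleteSpace H]
  {d : ℕ} {Xs : Set (Fin d → 𝕜)}

theorem case1_key (Θ : MeasFC ↥Xs 𝕜 H) (x : H) (j : Fin d) :
    ∃ (h1 : Θ.apb (rf Xs) meas_r bdd_r x ∈ (Θ.ap (zf Xs j)).domain)
      (h2 : Θ.ap (zf Xs j) ⟨Θ.apb (rf Xs) meas_r bdd_r x, h1⟩ ∈ (Θ.ap (czf Xs j)).domain),
      Θ.ap (zf Xs j) ⟨Θ.apb (rf Xs) meas_r bdd_r x, h1⟩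
          = Θ.apb (zrf Xs j) (meas_zr j) (bdd_zr j) x ∧
      Θ.ap (czf Xs j) ⟨Θ.ap (zf Xs j) ⟨Θ.apb (rf Xs) meas_r bdd_r x, h1⟩, h2⟩
          = Θ.apb (qf Xs j) (meas_q j) (bdd_q j) x := by
  obtain ⟨h1, e1⟩ := Θ.mul_apply (f := zf Xs j) (g := rf Xs) (meas_z j) meas_r
    (Θ.memDom meas_r bdd_r x) (Θ.memDom (meas_zr j) (bdd_zr j) x)
  obtain ⟨h2', e2⟩ := Θ.mul_apply (f := czf Xs j) (g := zrf Xs j) (meas_cz j) (meas_zr j)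
    (Θ.memDom (meas_zr j) (bdd_zr j) x) (Θ.memDom (meas_q j) (bdd_q j) x)
  have e1' : Θ.ap (zf Xs j) ⟨Θ.apb (rf Xs) meas_r bdd_r x, h1⟩
      = Θ.apb (zrf Xs j) (meas_zr j) (bdd_zr j) x := e1
  have h2 : Θ.ap (zf Xs j) ⟨Θ.apb (rf Xs) meas_r bdd_r x, h1⟩ ∈ (Θ.ap (czf Xs j)).domain := by
    rw [e1']; exact h2'
  refine ⟨h1, h2, e1', ?_⟩
  have e3 : Θ.ap (czf Xs j) ⟨Θ.ap (zf Xs j) ⟨Θ.apb (rf Xs) meas_r bdd_r x, h1⟩, h2⟩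
      = Θ.ap (czf Xs j) ⟨Θ.ap (zrf Xs j) ⟨x, Θ.memDom (meas_zr j) (bdd_zr j) x⟩, h2'⟩ := by
    congr 1
    exact Subtype.ext e1'
  exact e3.trans e2

theorem case1_sum (Θ : MeasFC ↥Xs 𝕜 H) (x : H) :
    Θ.apb (rf Xs) meas_r bdd_r x
      + ∑ j, Θ.apb (qf Xs j) (meas_q j) (bdd_q j) x = x := by
  have hmsum : Measurable fun y : ↥Xs => ∑ j, qf Xs j y :=
    Finset.measurable_sum _ fun j _ => meas_q j
  have hbsum : Bdd fun y : ↥Xs => ∑ j, qf Xs j y := Bdd.sum _ _ fun j => bdd_q j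
  have hfun : (rf Xs + fun y => ∑ j, qf Xs j y) = fun _ : ↥Xs => (1 : 𝕜) := by
    funext y
    have hc : ∀ j, qf Xs j y = ((‖zf Xs j y‖ ^ 2 : ℝ) : 𝕜) * rf Xs y := by
      intro j
      show czf Xs j y * (zf Xs j y * rf Xs y) = _
      rw [← mul_assoc, czf]
      congr 1
      rw [RCLike.conj_mul]
      norm_cast
    show rf Xs y + (∑ j, qf Xs j y) = 1
    simp_rw [hc]
    rw [← Finset.sum_mul, rf]
    have hcast : ((hKf Xs y : ℝ) : 𝕜) = 1 + ∑ j, ((‖zf Xs j y‖ ^ 2 : ℝ) : 𝕜) := by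
      rw [hKf]
      push_cast
      rfl
    calc ((hKf Xs y : ℝ) : 𝕜)⁻¹ + (∑ j, ((‖zf Xs j y‖ ^ 2 : ℝ) : 𝕜)) * ((hKf Xs y : ℝ) : 𝕜)⁻¹
        = (1 + ∑ j, ((‖zf Xs j y‖ ^ 2 : ℝ) : 𝕜)) * ((hKf Xs y : ℝ) : 𝕜)⁻¹ := by ring
      _ = ((hKf Xs y : ℝ) : 𝕜) * ((hKf Xs y : ℝ) : 𝕜)⁻¹ := by rw [← hcast]
      _ = 1 := mul_inv_cancel₀ (hK_ne y)
  have h1 : Θ.apb (rf Xs + fun y => ∑ j, qf Xs j y) (meas_r.add hmsum) (bdd_r.add hbsum) x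
      = x :=
    (Θ.apb_congr (meas_r.add hmsum) (bdd_r.add hbsum) measurable_const (Bdd.const 1)
      hfun x).trans (Θ.apb_one' measurable_const (Bdd.const 1) x)
  have h2 := Θ.apb_add meas_r bdd_r hmsum hbsum x
  have h3 := Θ.apb_sum Finset.univ (qf Xs) meas_q bdd_q hmsum hbsum x
  rw [← h3, ← h2, h1]

theorem case1 (Φ Ψ : MeasFC ↥Xs 𝕜 H)
    (hz : ∀ j, Φ.ap (zf Xs j) = Ψ.ap (zf Xs j)) :
    ∀ f : ↥Xs → 𝕜, Measurable f → Φ.ap f = Ψ.ap f := by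
  have hr_pt : ∀ x : H, Φ.apb (rf Xs) meas_r bdd_r x = Ψ.apb (rf Xs) meas_r bdd_r x := by
    intro x
    choose h1Φ h2Φ e1Φ e2Φ using fun j => case1_key Φ x j
    choose h1Ψ h2Ψ e1Ψ e2Ψ using fun j => case1_key Ψ x j
    set u := Φ.apb (rf Xs) meas_r bdd_r x with hu
    set u' := Ψ.apb (rf Xs) meas_r bdd_r x with hu'
    have hu'dom : ∀ j, u' ∈ (Φ.ap (zf Xs j)).domain := fun j => by
      rw [hz j]; exact h1Ψ j
    have hwdom : ∀ j, u - u' ∈ (Φ.ap (zf Xs j)).domain := fun j =>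
      Submodule.sub_mem _ (h1Φ j) (hu'dom j)
    have hsΦ := case1_sum Φ x
    have hsΨ := case1_sum Ψ x
    have hdiff : (u - u') + ∑ j, (Φ.apb (qf Xs j) (meas_q j) (bdd_q j) x
        - Ψ.apb (qf Xs j) (meas_q j) (bdd_q j) x) = 0 := by
      have h0 : (u + ∑ j, Φ.apb (qf Xs j) (meas_q j) (bdd_q j) x)
          - (u' + ∑ j, Ψ.apb (qf Xs j) (meas_q j) (bdd_q j) x) = 0 := by
        rw [hsΦ, hsΨ, sub_self]
      rw [Finset.sum_sub_distrib]
      have harr : (u - u') + ((∑ j, Φ.apb (qf Xs j) (meas_q j) (bdd_q j) x)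
          - ∑ j, Ψ.apb (qf Xs j) (meas_q j) (bdd_q j) x)
          = (u + ∑ j, Φ.apb (qf Xs j) (meas_q j) (bdd_q j) x)
          - (u' + ∑ j, Ψ.apb (qf Xs j) (meas_q j) (bdd_q j) x) := by abel
      rw [harr]
      exact h0
    have hinner : (inner 𝕜 ((u - u') + ∑ j, (Φ.apb (qf Xs j) (meas_q j) (bdd_q j) x
        - Ψ.apb (qf Xs j) (meas_q j) (bdd_q j) x)) (u - u') : 𝕜) = 0 := by
      rw [hdiff, inner_zero_left]
    rw [inner_add_left, sum_inner] at hinner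
    have hterm : ∀ j : Fin d, (inner 𝕜 (Φ.apb (qf Xs j) (meas_q j) (bdd_q j) x
        - Ψ.apb (qf Xs j) (meas_q j) (bdd_q j) x) (u - u') : 𝕜)
        = inner 𝕜 (Φ.ap (zf Xs j) ⟨u - u', hwdom j⟩) (Φ.ap (zf Xs j) ⟨u - u', hwdom j⟩) := by
      intro j
      have hzconj : zf Xs j = fun y => starRingEnd 𝕜 (czf Xs j y) := by
        funext y; rw [czf, RCLike.conj_conj]
      have hΦ1 : (inner 𝕜 (Φ.apb (qf Xs j) (meas_q j) (bdd_q j) x) (u - u') : 𝕜)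
          = inner 𝕜 (Φ.ap (zf Xs j) ⟨u, h1Φ j⟩) (Φ.ap (zf Xs j) ⟨u - u', hwdom j⟩) := by
        rw [← e2Φ j]
        exact Φ.pairing (meas_cz j) hzconj ⟨_, h2Φ j⟩ ⟨u - u', hwdom j⟩
      have hwdomΨ : u - u' ∈ (Ψ.ap (zf Xs j)).domain := by
        rw [← hz j]; exact hwdom j
      have hΨ1 : (inner 𝕜 (Ψ.apb (qf Xs j) (meas_q j) (bdd_q j) x) (u - u') : 𝕜)
          = inner 𝕜 (Ψ.ap (zf Xs j) ⟨u', h1Ψ j⟩) (Ψ.ap (zf Xs j) ⟨u - u', hwdomΨ⟩) := by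
        rw [← e2Ψ j]
        exact Ψ.pairing (meas_cz j) hzconj ⟨_, h2Ψ j⟩ ⟨u - u', hwdomΨ⟩
      have c1 : Ψ.ap (zf Xs j) ⟨u', h1Ψ j⟩ = Φ.ap (zf Xs j) ⟨u', hu'dom j⟩ :=
        pmap_congr (hz j).symm (h1Ψ j) (hu'dom j)
      have c2 : Ψ.ap (zf Xs j) ⟨u - u', hwdomΨ⟩ = Φ.ap (zf Xs j) ⟨u - u', hwdom j⟩ :=
        pmap_congr (hz j).symm hwdomΨ (hwdom j)
      have hsub : (⟨u, h1Φ j⟩ : (Φ.ap (zf Xs j)).domain) - ⟨u', hu'dom j⟩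
          = ⟨u - u', hwdom j⟩ := Subtype.ext (by simp)
      rw [inner_sub_left, hΦ1, hΨ1, c1, c2, ← inner_sub_left, ← LinearPMap.map_sub, hsub]
    simp_rw [hterm] at hinner
    have hre := congrArg RCLike.re hinner
    rw [map_add, map_sum] at hre
    have hre1 : RCLike.re (inner 𝕜 (u - u') (u - u') : 𝕜) = ‖u - u'‖ ^ 2 :=
      inner_self_eq_norm_sq _
    have hre2 : ∀ j : Fin d, RCLike.re (inner 𝕜 (Φ.ap (zf Xs j) ⟨u - u', hwdom j⟩)
        (Φ.ap (zf Xs j) ⟨u - u', hwdom j⟩) : 𝕜)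
        = ‖(Φ.ap (zf Xs j) ⟨u - u', hwdom j⟩ : H)‖ ^ 2 := fun j => inner_self_eq_norm_sq _
    rw [hre1] at hre
    simp_rw [hre2] at hre
    have hsum_nonneg : 0 ≤ ∑ j, ‖(Φ.ap (zf Xs j) ⟨u - u', hwdom j⟩ : H)‖ ^ 2 :=
      Finset.sum_nonneg fun j _ => sq_nonneg _
    have hw2 : ‖u - u'‖ ^ 2 ≤ 0 := by
      rw [map_zero] at hre
      linarith
    have hw0 : u - u' = 0 := by
      have := sq_nonneg ‖u - u'‖
      have hn : ‖u - u'‖ ^ 2 = 0 := le_antisymm hw2 this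
      have : ‖u - u'‖ = 0 := by
        have := pow_eq_zero_iff (n := 2) (by norm_num) |>.mp hn
        exact this
      exact norm_eq_zero.mp this
    exact sub_eq_zero.mp hw0
  have hr : Φ.ap (rf Xs) = Ψ.ap (rf Xs) := Φ.eq_of_apb meas_r bdd_r hr_pt
  have hzr_pt : ∀ (j : Fin d) (x : H),
      Φ.apb (zrf Xs j) (meas_zr j) (bdd_zr j) x
        = Ψ.apb (zrf Xs j) (meas_zr j) (bdd_zr j) x := by
    intro j x
    choose h1Φ h2Φ e1Φ e2Φ using fun j => case1_key Φ x j
    choose h1Ψ h2Ψ e1Ψ e2Ψ using fun j => case1_key Ψ x j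
    rw [← e1Φ j, ← e1Ψ j]
    have huu : Φ.apb (rf Xs) meas_r bdd_r x = Ψ.apb (rf Xs) meas_r bdd_r x := hr_pt x
    have hd : Ψ.apb (rf Xs) meas_r bdd_r x ∈ (Φ.ap (zf Xs j)).domain := huu ▸ h1Φ j
    calc Φ.ap (zf Xs j) ⟨Φ.apb (rf Xs) meas_r bdd_r x, h1Φ j⟩
        = Φ.ap (zf Xs j) ⟨Ψ.apb (rf Xs) meas_r bdd_r x, hd⟩ := by
          congr 1; exact Subtype.ext huu
      _ = Ψ.ap (zf Xs j) ⟨Ψ.apb (rf Xs) meas_r bdd_r x, h1Ψ j⟩ :=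
          pmap_congr (hz j) hd (h1Ψ j)
  have hzr : ∀ j, Φ.ap (zrf Xs j) = Ψ.ap (zrf Xs j) := fun j =>
    Φ.eq_of_apb (meas_zr j) (bdd_zr j) (hzr_pt j)
  have hwf : ∀ j, Φ.ap (wf Xs j) = Ψ.ap (wf Xs j) := by
    intro j
    have hfun : zrf Xs j = wf Xs j := by
      funext y
      show zf Xs j y * rf Xs y = zf Xs j y / ((hKf Xs y : ℝ) : 𝕜)
      rw [rf, div_eq_mul_inv]
    rw [← hfun]
    exact hzr j
  exact case2 Φ Ψ hwf hr

end Case1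

/-- Theorem 5.8: uniqueness of measurable calculi on a Borel subset `X ⊆ 𝕜^d`. Agreement on
(1) the coordinates, or (2) on `z_j/(1+|z|²)` and `1/(1+|z|²)`, or (3) on
`z_j/(1+|z|²)^{1/2}`, forces the two calculi to coincide. -/
theorem mfc_uniqueness_on_borel_subset_of_Kd {d : ℕ} {Xs : Set (Fin d → 𝕜)}
    (hXs : MeasurableSet Xs) (Φ Ψ : MeasFC ↥Xs 𝕜 H) :
    -- (1)
    ((∀ j : Fin d, Φ.ap (fun x => (x : Fin d → 𝕜) j) = Ψ.ap (fun x => (x : Fin d → 𝕜) j)) →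
      ∀ f : ↥Xs → 𝕜, Measurable f → Φ.ap f = Ψ.ap f) ∧
    -- (2)
    (((∀ j : Fin d,
        Φ.ap (fun x => (x : Fin d → 𝕜) j / ((1 + ∑ i, ‖(x : Fin d → 𝕜) i‖ ^ 2 : ℝ) : 𝕜)) =
        Ψ.ap (fun x => (x : Fin d → 𝕜) j / ((1 + ∑ i, ‖(x : Fin d → 𝕜) i‖ ^ 2 : ℝ) : 𝕜))) ∧
      Φ.ap (fun x => (((1 + ∑ i, ‖(x : Fin d → 𝕜) i‖ ^ 2 : ℝ) : 𝕜))⁻¹) =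
        Ψ.ap (fun x => (((1 + ∑ i, ‖(x : Fin d → 𝕜) i‖ ^ 2 : ℝ) : 𝕜))⁻¹)) →
      ∀ f : ↥Xs → 𝕜, Measurable f → Φ.ap f = Ψ.ap f) ∧
    -- (3)
    ((∀ j : Fin d,
        Φ.ap (fun x => (x : Fin d → 𝕜) j /
          ((Real.sqrt (1 + ∑ i, ‖(x : Fin d → 𝕜) i‖ ^ 2) : ℝ) : 𝕜)) =
        Ψ.ap (fun x => (x : Fin d → 𝕜) j /
          ((Real.sqrt (1 + ∑ i, ‖(x : Fin d → 𝕜) i‖ ^ 2) : ℝ) : 𝕜))) →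
      ∀ f : ↥Xs → 𝕜, Measurable f → Φ.ap f = Ψ.ap f) := by
  have hM : ‹MeasurableSpace 𝕜› = RCLike.measurableSpace := BorelSpace.measurable_eq
  subst hM
  refine ⟨?_, ?_, ?_⟩
  · intro h f hf
    exact case1 Φ Ψ (fun j => h j) f hf
  · rintro ⟨hw, hr⟩ f hf
    exact case2 Φ Ψ (fun j => hw j) hr f hf
  · intro h f hf
    exact case3 Φ Ψ (fun j => h j) f hf

end
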